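/- Let n ≥ 1, let B = B₁ = {(z,t) ∈ ℍⁿ : |z| ≤ 1, |t| ≤ 1}, let k ∈ ℕ and λ > 0, and set ν = 4k+2n. Then the radial Fourier coefficient of the indicator function of B satisfies χ̂_B(λ,k) = r_k · (sin λ / λ^{n+1}) · (2ν)^{(n+1)/2} · ∫₀^{λ/(2ν)} Λ_k^{n−1}(νt) t^{(n−1)/2} dt. -/

import Mathlib

open MeasureTheory Complex

noncomputable section

/-- The generalized Laguerre polynomials
`L_k^δ(t) = t^{−δ} e^t (1/k!) (d/dt)^k (e^{−t} t^{k+δ})`. -/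
def genLaguerre (k : ℕ) (δ : ℝ) (t : ℝ) : ℝ :=
  t ^ (-δ) * Real.exp t * ((k.factorial : ℝ))⁻¹ *
    iteratedDeriv k (fun s => Real.exp (-s) * s ^ ((k : ℝ) + δ)) t

/-- The normalizing constant `r_k = (k!/(n+k−1)!)^{1/2}`. -/
def rk (n k : ℕ) : ℝ := Real.sqrt ((k.factorial : ℝ) / ((n + k - 1).factorial : ℝ))

/-- The Laguerre functions `Λ_k^{n−1}(t) = r_k L_k^{n−1}(t) e^{−t/2} t^{(n−1)/2}`. -/
def lagFun (n k : ℕ) (t : ℝ) : ℝ :=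
  rk n k * genLaguerre k ((n : ℝ) - 1) t * Real.exp (-t / 2) * t ^ (((n : ℝ) - 1) / 2)

/-- The radial Fourier coefficient
`f̂(λ,k) = r_k ∫₀^∞ f_#^λ(r) (|λ|r²)^{(1−n)/2} Λ_k^{n−1}(|λ|r²/2) r^{2n−1} dr`,
where `f_#^λ(r) = ∫_ℝ f_#(r,t) e^{iλt} dt`. -/
def radialCoeff (n : ℕ) (fsharp : ℝ → ℝ → ℂ) (lam : ℝ) (k : ℕ) : ℂ :=
  (rk n k : ℂ) * ∫ r in Set.Ioi (0 : ℝ),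
    (∫ t : ℝ, fsharp r t * Complex.exp (Complex.I * (lam : ℂ) * (t : ℂ))) *
      (((|lam| * r ^ 2) ^ ((1 - (n : ℝ)) / 2) : ℝ) : ℂ) *
      ((lagFun n k (|lam| * r ^ 2 / 2) : ℝ) : ℂ) *
      ((r ^ (2 * (n : ℝ) - 1) : ℝ) : ℂ)

lemma inner_int (lam : ℝ) (hlam : 0 < lam) (r : ℝ) :
    (∫ t : ℝ, (if r ≤ 1 ∧ |t| ≤ 1 then (1 : ℂ) else 0) * Complex.exp (Complex.I * (lam : ℂ) * (t : ℂ)))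
      = if r ≤ 1 then ((2 * Real.sin lam / lam : ℝ) : ℂ) else 0 := by
  by_cases hr : r ≤ 1
  · simp only [hr, true_and, if_true]
    have h1 : (fun t : ℝ => (if |t| ≤ 1 then (1 : ℂ) else 0) * Complex.exp (Complex.I * (lam : ℂ) * (t : ℂ)))
        = Set.indicator (Set.Icc (-1 : ℝ) 1) (fun t => Complex.exp (Complex.I * (lam : ℂ) * (t : ℂ))) := by
      funext t
      by_cases ht : |t| ≤ 1
      · simp [Set.indicator, ht, abs_le.mp ht]
      · have : t ∉ Set.Icc (-1 : ℝ) 1 := by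
          rw [Set.mem_Icc, ← abs_le]; exact ht
        simp [Set.indicator, ht, this]
    rw [h1, integral_indicator measurableSet_Icc, integral_Icc_eq_integral_Ioc,
      ← intervalIntegral.integral_of_le (by norm_num : (-1 : ℝ) ≤ 1)]
    have hc : (Complex.I * (lam : ℂ)) ≠ 0 := by
      simp [Complex.I_ne_zero, Complex.ofReal_ne_zero, hlam.ne']
    rw [integral_exp_mul_complex hc]
    have hl : (lam : ℂ) ≠ 0 := by simp [hlam.ne']
    rw [show Complex.I * (lam : ℂ) * ((1:ℝ) : ℂ) = (lam : ℂ) * Complex.I by push_cast; ring,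
      show Complex.I * (lam : ℂ) * ((-1:ℝ) : ℂ) = (-(lam : ℂ)) * Complex.I by push_cast; ring,
      Complex.exp_mul_I, Complex.exp_mul_I, Complex.cos_neg, Complex.sin_neg]
    push_cast [Complex.ofReal_sin]
    field_simp
    ring
  · simp [hr]

/-- The radial Fourier coefficient of the indicator of
`B = {(z,t) : |z| ≤ 1, |t| ≤ 1}` (whose radial profile is
`χ_{[0,1]}(r)·χ_{[−1,1]}(t)`) satisfies, for `λ > 0` and `ν = 4k+2n`,
`χ̂_B(λ,k) = r_k (sin λ/λ^{n+1}) (2ν)^{(n+1)/2} ∫₀^{λ/(2ν)} Λ_k^{n−1}(νt) t^{(n−1)/2} dt`. -/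
theorem radialCoeff_indicator_box
    (n : ℕ) (hn : 1 ≤ n) (k : ℕ) (lam : ℝ) (hlam : 0 < lam) :
    radialCoeff n (fun r t => if r ≤ 1 ∧ |t| ≤ 1 then (1 : ℂ) else 0) lam k =
      ((rk n k * (Real.sin lam / lam ^ (n + 1)) *
            (2 * ((4 * k + 2 * n : ℕ) : ℝ)) ^ (((n : ℝ) + 1) / 2) *
            ∫ t in (0 : ℝ)..(lam / (2 * ((4 * k + 2 * n : ℕ) : ℝ))),
              lagFun n k (((4 * k + 2 * n : ℕ) : ℝ) * t) * t ^ (((n : ℝ) - 1) / 2) : ℝ) : ℂ) := by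
  have hlne : lam ≠ 0 := hlam.ne'
  set ν : ℝ := ((4 * k + 2 * n : ℕ) : ℝ) with hν
  have hν0 : 0 < ν := by
    have : 0 < 4 * k + 2 * n := by omega
    rw [hν]; exact_mod_cast this
  set a : ℝ := 2 * ν with ha
  have ha0 : 0 < a := by positivity
  set L : ℝ := lam / a with hL
  have hL0 : 0 < L := by positivity
  set G : ℝ → ℝ := fun r =>
    (lam * r ^ 2) ^ ((1 - (n : ℝ)) / 2) * lagFun n k (lam * r ^ 2 / 2) *
      r ^ (2 * (n : ℝ) - 1) with hG
  set c : ℝ := 2 * Real.sin lam / lam with hc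
  -- Step 1: reduce LHS
  have step1 : radialCoeff n (fun r t => if r ≤ 1 ∧ |t| ≤ 1 then (1 : ℂ) else 0) lam k
      = (rk n k : ℂ) * ((c : ℝ) : ℂ) * ((∫ r in Set.Ioc (0:ℝ) 1, G r : ℝ) : ℂ) := by
    rw [radialCoeff]
    have habs : |lam| = lam := abs_of_pos hlam
    have heq : Set.EqOn
        (fun r : ℝ =>
          (∫ t : ℝ, (if r ≤ 1 ∧ |t| ≤ 1 then (1 : ℂ) else 0) * Complex.exp (Complex.I * (lam : ℂ) * (t : ℂ))) *
            (((|lam| * r ^ 2) ^ ((1 - (n : ℝ)) / 2) : ℝ) : ℂ) *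
            ((lagFun n k (|lam| * r ^ 2 / 2) : ℝ) : ℂ) *
            ((r ^ (2 * (n : ℝ) - 1) : ℝ) : ℂ))
        (Set.indicator (Set.Ioc (0:ℝ) 1) (fun r => ((c * G r : ℝ) : ℂ)))
        (Set.Ioi (0:ℝ)) := by
      intro r hr
      simp only [Set.mem_Ioi] at hr
      simp only [inner_int lam hlam r]
      by_cases hr1 : r ≤ 1
      · have hmem : r ∈ Set.Ioc (0:ℝ) 1 := ⟨hr, hr1⟩
        simp only [hr1, if_true, Set.indicator_of_mem hmem, hG, hc, habs]
        push_cast [Complex.ofReal_sin]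
        ring
      · have hmem : r ∉ Set.Ioc (0:ℝ) 1 := fun h => hr1 h.2
        simp [hr1, Set.indicator_of_notMem hmem]
    rw [setIntegral_congr_fun measurableSet_Ioi heq, setIntegral_indicator measurableSet_Ioc,
      show Set.Ioi (0:ℝ) ∩ Set.Ioc 0 1 = Set.Ioc 0 1 by
        rw [Set.inter_eq_self_of_subset_right Set.Ioc_subset_Ioi_self]]
    rw [show (fun r : ℝ => ((c * G r : ℝ) : ℂ)) = fun r : ℝ => ((c:ℝ):ℂ) * ((G r : ℝ) : ℂ) by
        funext r; push_cast; ring]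
    rw [integral_const_mul, ← mul_assoc]
    congr 1
    exact integral_ofReal
  rw [step1]
  -- Step 2: substitution r = f t, f t = sqrt(a/lam) * sqrt t
  set f : ℝ → ℝ := fun t => Real.sqrt (a / lam) * Real.sqrt t with hf
  have hal : 0 < a / lam := by positivity
  have himg : f '' Set.Ioc 0 L = Set.Ioc (0:ℝ) 1 := by
    ext r
    constructor
    · rintro ⟨t, ht, rfl⟩
      refine ⟨mul_pos (Real.sqrt_pos.mpr hal) (Real.sqrt_pos.mpr ht.1), ?_⟩
      rw [hf]
      simp only
      rw [← Real.sqrt_mul hal.le]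
      rw [Real.sqrt_le_one]
      calc a / lam * t ≤ a / lam * L := by gcongr; exact ht.2
        _ = 1 := by rw [hL]; field_simp
    · rintro ⟨hr0, hr1⟩
      refine ⟨lam * r ^ 2 / a, ⟨by positivity, ?_⟩, ?_⟩
      · rw [hL]
        have hr2 : r ^ 2 ≤ 1 := pow_le_one₀ hr0.le hr1
        gcongr
        nlinarith [mul_le_mul_of_nonneg_left hr2 hlam.le]
      · rw [hf]
        simp only
        rw [← Real.sqrt_mul hal.le,
          show a / lam * (lam * r ^ 2 / a) = r ^ 2 by field_simp,
          Real.sqrt_sq hr0.le]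
  have hderiv : ∀ t ∈ Set.Ioc (0:ℝ) L,
      HasDerivWithinAt f (Real.sqrt (a/lam) * (1/(2*Real.sqrt t))) (Set.Ioc (0:ℝ) L) t :=
    fun t ht => ((Real.hasDerivAt_sqrt ht.1.ne').const_mul _).hasDerivWithinAt
  have hinj : Set.InjOn f (Set.Ioc 0 L) := by
    intro t1 h1 t2 h2 h
    have hc0 : Real.sqrt (a/lam) ≠ 0 := (Real.sqrt_pos.mpr hal).ne'
    exact (Real.sqrt_inj h1.1.le h2.1.le).mp (mul_left_cancel₀ hc0 h)
  have hsub := integral_image_eq_integral_abs_deriv_smul measurableSet_Ioc hderiv hinj G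
  rw [himg] at hsub
  rw [hsub]
  -- Step 3: pointwise computation
  set C : ℝ := a ^ (((n:ℝ)+1)/2) / (2 * lam ^ ((n:ℝ))) with hC
  have key : Set.EqOn
      (fun t => |Real.sqrt (a/lam) * (1/(2*Real.sqrt t))| • G (f t))
      (fun t => C * (lagFun n k (ν*t) * t ^ (((n:ℝ)-1)/2))) (Set.Ioc 0 L) := by
    intro u hu
    have hu0 : 0 < u := hu.1
    set x : ℝ := a * u / lam with hx
    have hx0 : 0 < x := by positivity
    have hfu : f u = x ^ ((1:ℝ)/2) := by
      rw [hf]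
      simp only
      rw [← Real.sqrt_mul hal.le, show a/lam*u = x by rw [hx]; ring, Real.sqrt_eq_rpow]
    have hfu2 : f u ^ (2:ℕ) = x := by
      rw [hfu, ← Real.rpow_natCast (x ^ ((1:ℝ)/2)) 2, ← Real.rpow_mul hx0.le]
      norm_num
    have hlx : lam * x = a * u := by rw [hx]; field_simp
    simp only [smul_eq_mul, hG]
    rw [hfu2, hlx, show a * u / 2 = ν * u by rw [ha]; ring, hfu,
      ← Real.rpow_mul hx0.le,
      _root_.abs_of_nonneg (show (0:ℝ) ≤ Real.sqrt (a/lam) * (1/(2*Real.sqrt u)) by positivity)]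
    rw [Real.sqrt_eq_rpow, Real.sqrt_eq_rpow, Real.div_rpow ha0.le hlam.le,
      Real.mul_rpow ha0.le hu0.le,
      show x ^ ((1:ℝ)/2 * (2*(n:ℝ)-1)) = (a*u/lam) ^ ((1:ℝ)/2 * (2*(n:ℝ)-1)) by rw [hx],
      Real.div_rpow (by positivity) hlam.le, Real.mul_rpow ha0.le hu0.le, hC]
    rw [show (1:ℝ)/2*(2*(n:ℝ)-1) = (2*(n:ℝ)-1)/2 by ring]
    have Ha : a ^ ((1:ℝ)/2) * a ^ ((1-(n:ℝ))/2) * a ^ ((2*(n:ℝ)-1)/2) = a ^ (((n:ℝ)+1)/2) := by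
      rw [← Real.rpow_add ha0, ← Real.rpow_add ha0]; congr 1; ring
    have Hu : u ^ ((1-(n:ℝ))/2) * u ^ ((2*(n:ℝ)-1)/2) = u ^ (((n:ℝ)-1)/2) * u ^ ((1:ℝ)/2) := by
      rw [← Real.rpow_add hu0, ← Real.rpow_add hu0]; congr 1; ring
    have Hl : lam ^ ((1:ℝ)/2) * lam ^ ((2*(n:ℝ)-1)/2) = lam ^ n := by
      rw [← Real.rpow_add hlam, show (1:ℝ)/2 + (2*(n:ℝ)-1)/2 = ((n:ℕ):ℝ) by ring,
        Real.rpow_natCast]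
    have h1 : lam ^ ((1:ℝ)/2) ≠ 0 := (Real.rpow_pos_of_pos hlam _).ne'
    have h2 : u ^ ((1:ℝ)/2) ≠ 0 := (Real.rpow_pos_of_pos hu0 _).ne'
    have h3 : lam ^ ((2*(n:ℝ)-1)/2) ≠ 0 := (Real.rpow_pos_of_pos hlam _).ne'
    have h4 : (lam : ℝ) ^ n ≠ 0 := pow_ne_zero _ hlne
    field_simp
    linear_combination (lagFun n k (ν*u) * (u ^ ((1-(n:ℝ))/2) * u ^ ((2*(n:ℝ)-1)/2)) * lam ^ (n:ℝ)) * Ha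
      + (lagFun n k (ν*u) * a ^ (((n:ℝ)+1)/2) * lam ^ (n:ℝ)) * Hu
      - (lagFun n k (ν*u) * a ^ (((n:ℝ)+1)/2) * (u ^ (((n:ℝ)-1)/2) * u ^ ((1:ℝ)/2))) * Hl
      + (lagFun n k (ν*u) * a ^ (((n:ℝ)+1)/2) * (u ^ (((n:ℝ)-1)/2) * u ^ ((1:ℝ)/2))) * Real.rpow_natCast lam n
  rw [setIntegral_congr_fun measurableSet_Ioc key]
  rw [intervalIntegral.integral_of_le hL0.le, integral_const_mul]
  rw [← Complex.ofReal_mul, ← Complex.ofReal_mul]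
  refine congrArg Complex.ofReal ?_
  set J : ℝ := ∫ t in Set.Ioc (0:ℝ) L, lagFun n k (ν*t) * t ^ (((n:ℝ)-1)/2) with hJ
  rw [hc, hC]
  have hlam' : lam ^ (n+1) = lam ^ ((n:ℝ)) * lam := by
    rw [← Real.rpow_natCast lam (n+1)]
    push_cast
    rw [Real.rpow_add hlam, Real.rpow_one]
  rw [hlam']
  have h4 : lam ^ ((n:ℝ)) ≠ 0 := (Real.rpow_pos_of_pos hlam _).ne'
  field_simp
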